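/- arXiv:1308.5136 — 3 statements merged into one kernel-verified Lean document; each statement's English description precedes it below -/
import Mathlib

section
/- For interval type-2 fuzzy sets A, B over a finite nonempty domain X such that ū_A is not identically zero or ū_B is not identically zero, S_J(A,B) = 1 if and only if u̲_A = u̲_B and ū_A = ū_B. -/
theorem jaccard_eq_one_iff
    (X : Type*) [Fintype X] [Nonempty X]
    (lA uA lB uB : X → ℝ)
    (hA0 : ∀ x, 0 ≤ lA x) (hA : ∀ x, lA x ≤ uA x) (hA1 : ∀ x, uA x ≤ 1)
    (hB0 : ∀ x, 0 ≤ lB x) (hB : ∀ x, lB x ≤ uB x) (hB1 : ∀ x, uB x ≤ 1)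
    (hnz : (∃ x, uA x ≠ 0) ∨ (∃ x, uB x ≠ 0)) :
    ((∑ x, min (uA x) (uB x)) + ∑ x, min (lA x) (lB x)) /
      ((∑ x, max (uA x) (uB x)) + ∑ x, max (lA x) (lB x)) = 1 ↔
    lA = lB ∧ uA = uB := by
  have hu0 : ∀ x, 0 ≤ uA x := fun x => (hA0 x).trans (hA x)
  have hv0 : ∀ x, 0 ≤ uB x := fun x => (hB0 x).trans (hB x)
  -- denominator positive
  have hDpos : 0 < (∑ x, max (uA x) (uB x)) + ∑ x, max (lA x) (lB x) := by
    have h1 : 0 < ∑ x, max (uA x) (uB x) := by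
      obtain ⟨x, hx⟩ | ⟨x, hx⟩ := hnz
      · exact Finset.sum_pos' (fun i _ => le_max_iff.2 (Or.inl (hu0 i)))
          ⟨x, Finset.mem_univ x, lt_max_iff.2 (Or.inl (lt_of_le_of_ne (hu0 x) (Ne.symm hx)))⟩
      · exact Finset.sum_pos' (fun i _ => le_max_iff.2 (Or.inl (hu0 i)))
          ⟨x, Finset.mem_univ x, lt_max_iff.2 (Or.inr (lt_of_le_of_ne (hv0 x) (Ne.symm hx)))⟩
    have h2 : 0 ≤ ∑ x, max (lA x) (lB x) :=
      Finset.sum_nonneg fun i _ => le_max_iff.2 (Or.inl (hA0 i))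
    linarith
  rw [div_eq_one_iff_eq (ne_of_gt hDpos)]
  constructor
  · intro h
    have hkey : (∑ x, (max (uA x) (uB x) - min (uA x) (uB x)))
        + ∑ x, (max (lA x) (lB x) - min (lA x) (lB x)) = 0 := by
      simp only [Finset.sum_sub_distrib]
      linarith
    have hu : ∀ x ∈ Finset.univ, max (uA x) (uB x) - min (uA x) (uB x) = 0 := by
      have := Finset.sum_eq_zero_iff_of_nonneg
        (fun i (_ : i ∈ Finset.univ) => sub_nonneg.2 (min_le_max (a := uA i) (b := uB i)))
      apply this.1
      have h2 : 0 ≤ ∑ x, (max (lA x) (lB x) - min (lA x) (lB x)) :=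
        Finset.sum_nonneg fun i _ => sub_nonneg.2 min_le_max
      have h1 : 0 ≤ ∑ x, (max (uA x) (uB x) - min (uA x) (uB x)) :=
        Finset.sum_nonneg fun i _ => sub_nonneg.2 min_le_max
      linarith
    have hl : ∀ x ∈ Finset.univ, max (lA x) (lB x) - min (lA x) (lB x) = 0 := by
      have := Finset.sum_eq_zero_iff_of_nonneg
        (fun i (_ : i ∈ Finset.univ) => sub_nonneg.2 (min_le_max (a := lA i) (b := lB i)))
      apply this.1
      have h2 : 0 ≤ ∑ x, (max (lA x) (lB x) - min (lA x) (lB x)) :=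
        Finset.sum_nonneg fun i _ => sub_nonneg.2 min_le_max
      have h1 : 0 ≤ ∑ x, (max (uA x) (uB x) - min (uA x) (uB x)) :=
        Finset.sum_nonneg fun i _ => sub_nonneg.2 min_le_max
      linarith
    constructor
    · funext x
      have := hl x (Finset.mem_univ x)
      rcases le_total (lA x) (lB x) with h' | h' <;>
        simp [max_eq_right, max_eq_left, min_eq_left, min_eq_right, h'] at this <;> linarith
    · funext x
      have := hu x (Finset.mem_univ x)
      rcases le_total (uA x) (uB x) with h' | h' <;>
        simp [max_eq_right, max_eq_left, min_eq_left, min_eq_right, h'] at this <;> linarith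
  · rintro ⟨hl, hu⟩
    subst hl; subst hu
    simp
end

section
/- If interval type-2 fuzzy sets A ≤ B ≤ C pointwise (u̲_A ≤ u̲_B ≤ u̲_C and ū_A ≤ ū_B ≤ ū_C on the finite domain X), and the relevant denominators are positive, then the Jaccard similarity satisfies S_J(A,B) ≥ S_J(A,C). -/
theorem jaccard_transitive
    (X : Type*) [Fintype X]
    (lA uA lB uB lC uC : X → ℝ)
    (hA0 : ∀ x, 0 ≤ lA x) (hA : ∀ x, lA x ≤ uA x) (hA1 : ∀ x, uA x ≤ 1)
    (hB0 : ∀ x, 0 ≤ lB x) (hB : ∀ x, lB x ≤ uB x) (hB1 : ∀ x, uB x ≤ 1)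
    (hC0 : ∀ x, 0 ≤ lC x) (hC : ∀ x, lC x ≤ uC x) (hC1 : ∀ x, uC x ≤ 1)
    (hlAB : ∀ x, lA x ≤ lB x) (hlBC : ∀ x, lB x ≤ lC x)
    (huAB : ∀ x, uA x ≤ uB x) (huBC : ∀ x, uB x ≤ uC x)
    (hdenAB : 0 < (∑ x, max (uA x) (uB x)) + ∑ x, max (lA x) (lB x))
    (hdenAC : 0 < (∑ x, max (uA x) (uC x)) + ∑ x, max (lA x) (lC x)) :
    ((∑ x, min (uA x) (uC x)) + ∑ x, min (lA x) (lC x)) /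
      ((∑ x, max (uA x) (uC x)) + ∑ x, max (lA x) (lC x)) ≤
    ((∑ x, min (uA x) (uB x)) + ∑ x, min (lA x) (lB x)) /
      ((∑ x, max (uA x) (uB x)) + ∑ x, max (lA x) (lB x)) := by
  have e1 : ∀ x, min (uA x) (uC x) = uA x := fun x => min_eq_left ((huAB x).trans (huBC x))
  have e2 : ∀ x, min (lA x) (lC x) = lA x := fun x => min_eq_left ((hlAB x).trans (hlBC x))
  have e3 : ∀ x, min (uA x) (uB x) = uA x := fun x => min_eq_left (huAB x)
  have e4 : ∀ x, min (lA x) (lB x) = lA x := fun x => min_eq_left (hlAB x)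
  have e5 : ∀ x, max (uA x) (uC x) = uC x := fun x => max_eq_right ((huAB x).trans (huBC x))
  have e6 : ∀ x, max (lA x) (lC x) = lC x := fun x => max_eq_right ((hlAB x).trans (hlBC x))
  have e7 : ∀ x, max (uA x) (uB x) = uB x := fun x => max_eq_right (huAB x)
  have e8 : ∀ x, max (lA x) (lB x) = lB x := fun x => max_eq_right (hlAB x)
  simp only [e1, e2, e3, e4, e5, e6, e7, e8] at *
  apply div_le_div_of_nonneg_left
  · exact add_nonneg (Finset.sum_nonneg fun x _ => (hA0 x).trans (hA x)) (Finset.sum_nonneg fun x _ => hA0 x)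
  · exact hdenAB
  · exact add_le_add (Finset.sum_le_sum fun x _ => huBC x)
      (Finset.sum_le_sum fun x _ => hlBC x)
end

section
/- The Gorzałczany compatibility measure is not reflexive: there exist interval type-2 fuzzy sets A ≠ B over a finite domain with max_x u̲_A(x) = max_x u̲_B(x) > 0 and max_x ū_A(x) = max_x ū_B(x) > 0 such that S_G(A,B) = (1,1). -/
lemma sup_fin2_one (f : Fin 2 → ℝ) (h0 : f 0 = 1) (hle : ∀ i, f i ≤ 1) :
    (⨆ i, f i) = 1 := by
  apply le_antisymm
  · exact ciSup_le hle
  · rw [← h0]; exact le_ciSup (Set.Finite.bddAbove (Set.finite_range f)) 0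

theorem gorzalczany_not_reflexive :
    ∃ (n : ℕ) (_ : 0 < n) (lA uA lB uB : Fin n → ℝ),
      (∀ i, 0 ≤ lA i) ∧ (∀ i, lA i ≤ uA i) ∧ (∀ i, uA i ≤ 1) ∧
      (∀ i, 0 ≤ lB i) ∧ (∀ i, lB i ≤ uB i) ∧ (∀ i, uB i ≤ 1) ∧
      (lA, uA) ≠ (lB, uB) ∧
      (⨆ i, lA i) = (⨆ i, lB i) ∧ 0 < (⨆ i, lA i) ∧
      (⨆ i, uA i) = (⨆ i, uB i) ∧ 0 < (⨆ i, uA i) ∧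
      (⨆ i, min (lA i) (lB i)) / (⨆ i, lA i) = 1 ∧
      (⨆ i, min (uA i) (uB i)) / (⨆ i, uA i) = 1 := by
  have hf : (⨆ i : Fin 2, if i = 0 then (1:ℝ) else 0) = 1 :=
    sup_fin2_one _ (by norm_num) (fun i => by fin_cases i <;> norm_num)
  have hg : (⨆ i : Fin 2, if i = 0 then (1:ℝ) else 1/2) = 1 :=
    sup_fin2_one _ (by norm_num) (fun i => by fin_cases i <;> norm_num)
  have hm : (⨆ i : Fin 2, min (if i = 0 then (1:ℝ) else 0) (if i = 0 then 1 else 1/2)) = 1 :=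
    sup_fin2_one _ (by norm_num) (fun i => by fin_cases i <;> norm_num)
  refine ⟨2, by norm_num, (fun i => if i = 0 then 1 else 0),
    (fun i => if i = 0 then 1 else 0),
    (fun i => if i = 0 then 1 else 1/2),
    (fun i => if i = 0 then 1 else 1/2), ?_, ?_, ?_, ?_, ?_, ?_, ?_, ?_, ?_, ?_, ?_, ?_, ?_⟩
  · intro i; dsimp only; split <;> norm_num
  · intro i; rfl
  · intro i; dsimp only; split <;> norm_num
  · intro i; dsimp only; split <;> norm_num
  · intro i; rfl
  · intro i; dsimp only; split <;> norm_num
  · intro h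
    have := congrFun (congrArg Prod.fst h) 1
    norm_num at this
  all_goals simp only [] <;> norm_num [hf, hg, hm]
end
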